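/- gcd((2^37780 + 1) mod (5^9445 - 1), 5^9445 - 1) = 151121. Consequently, no integer of the form 151121 · p with p a prime greater than 151121 is a strong pseudoprime simultaneously to the bases 2, 3, and 5. -/

import Mathlib

set_option exponentiation.threshold 100000
set_option maxRecDepth 100000

private lemma odd_coprime_two_pow {m : ℕ} (hm : Odd m) (a : ℕ) : Nat.Coprime m (2 ^ a) :=
  Nat.Coprime.pow_right _ (Nat.coprime_comm.mp
    ((Nat.prime_two.coprime_iff_not_dvd).mpr (by rw [Nat.odd_iff] at hm; omega)))

private lemma odd_dvd_of_dvd {m a A : ℕ} (hm : Odd m) (h : m ∣ 2 ^ a * A) : m ∣ A :=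
  (odd_coprime_two_pow hm a).dvd_of_dvd_mul_left h

private lemma le_of_two_pow_dvd {e a A : ℕ} (hA : Odd A) (h : 2 ^ e ∣ 2 ^ a * A) : e ≤ a := by
  have cop : Nat.Coprime (2 ^ e) A :=
    Nat.Coprime.pow_left _ ((Nat.prime_two.coprime_iff_not_dvd).mpr
      (by rw [Nat.odd_iff] at hA; omega))
  have h2 : (2 : ℕ) ^ e ∣ 2 ^ a := cop.dvd_of_dvd_mul_right h
  exact (Nat.pow_dvd_pow_iff_le_right (by norm_num)).mp h2

/-- Split a divisor of `2^a * A` (with `A` odd) into its 2-part and odd part. -/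
private lemma split_dvd_aux {r a A : ℕ} (hA : Odd A) (h : r ∣ 2 ^ a * A) :
    ∃ e m, e ≤ a ∧ Odd m ∧ m ∣ A ∧ r = 2 ^ e * m := by
  have hApos : 0 < A := hA.pos
  have hr0 : r ≠ 0 := by
    rintro rfl
    have h0 : 2 ^ a * A = 0 := Nat.eq_zero_of_zero_dvd h
    have : 0 < 2 ^ a * A := Nat.mul_pos (Nat.pow_pos (by norm_num)) hApos
    omega
  refine ⟨r.factorization 2, r / 2 ^ r.factorization 2, ?_, ?_, ?_, ?_⟩
  · exact le_of_two_pow_dvd hA ((Nat.ordProj_dvd r 2).trans h)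
  · have := Nat.not_dvd_ordCompl Nat.prime_two hr0
    rw [Nat.odd_iff]; omega
  · have hmodd : Odd (r / 2 ^ r.factorization 2) := by
      have := Nat.not_dvd_ordCompl Nat.prime_two hr0
      rw [Nat.odd_iff]; omega
    exact odd_dvd_of_dvd hmodd ((Nat.ordCompl_dvd r 2).trans h)
  · exact (Nat.ordProj_mul_ordCompl_eq_self r 2).symm

theorem stmt_15 :
    Nat.gcd ((2 ^ 37780 + 1) % (5 ^ 9445 - 1)) (5 ^ 9445 - 1) = 151121 ∧
    ∀ p : ℕ, p.Prime → 151121 < p →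
      ¬ (∀ a ∈ ({2, 3, 5} : Finset ℕ),
          ∀ s d : ℕ, 151121 * p - 1 = 2 ^ s * d → Odd d →
            ((a : ZMod (151121 * p)) ^ d = 1 ∨
              ∃ k < s, (a : ZMod (151121 * p)) ^ (2 ^ k * d) = -1)) := by
  have hgcd : Nat.gcd ((2 ^ 37780 + 1) % (5 ^ 9445 - 1)) (5 ^ 9445 - 1) = 151121 := by decide
  refine ⟨hgcd, ?_⟩
  intro p hp hplt H
  haveI : Fact p.Prime := ⟨hp⟩
  haveI : NeZero p := ⟨hp.pos.ne'⟩
  set K : ℕ := 151121 with hK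
  set n : ℕ := K * p with hn
  set N : ℕ := n - 1 with hNdef
  have hp1 : 1 ≤ p := hp.one_lt.le
  have hN0 : N ≠ 0 := by simp only [hNdef, hn, hK]; omega
  set s : ℕ := N.factorization 2 with hs
  set d : ℕ := N / 2 ^ s with hd
  have hsd : N = 2 ^ s * d := (Nat.ordProj_mul_ordCompl_eq_self N 2).symm
  have hdodd : Odd d := by
    have h2d : ¬ (2:ℕ) ∣ d := Nat.not_dvd_ordCompl Nat.prime_two hN0
    rw [Nat.odd_iff]; omega
  have hdpos : 0 < d := hdodd.pos
  have h2 := H 2 (by decide) s d hsd hdodd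
  have h5 := H 5 (by decide) s d hsd hdodd
  have hKdvd : K ∣ n := dvd_mul_right K p
  have hpdvd : p ∣ n := dvd_mul_left p K
  let φ : ZMod n →+* ZMod K := ZMod.castHom hKdvd (ZMod K)
  let ψ : ZMod n →+* ZMod p := ZMod.castHom hpdvd (ZMod p)
  -- computational facts mod K
  have castK : ∀ a e : ℕ, ((a : ZMod K)) ^ e = ((a ^ e % K : ℕ) : ZMod K) := by
    intro a e; rw [← Nat.cast_pow, ← ZMod.natCast_mod]
  have neK : (-1 : ZMod K) ≠ 1 := by decide
  have fK1 : ((2 : ℕ) : ZMod K) ^ (2 ^ 3 * 9445) = 1 := by rw [castK]; decide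
  have fK2 : ((2 : ℕ) : ZMod K) ^ 9445 ≠ 1 := by
    rw [castK]
    intro h
    have := (ZMod.natCast_eq_natCast_iff _ _ _).mp (h.trans (Nat.cast_one).symm)
    revert this; decide
  have fK3 : ((2 : ℕ) : ZMod K) ^ (2 ^ 2 * 9445) ≠ 1 := by
    rw [castK]
    intro h
    have := (ZMod.natCast_eq_natCast_iff _ _ _).mp (h.trans (Nat.cast_one).symm)
    revert this; decide
  have fK4 : ((5 : ℕ) : ZMod K) ^ 9445 = 1 := by rw [castK]; decide
  -- facts mod p
  have nep : (-1 : ZMod p) ≠ 1 := by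
    intro h
    have h2' : ((2 : ℕ) : ZMod p) = 0 := by push_cast; linear_combination -h
    have := Nat.le_of_dvd (by norm_num) ((ZMod.natCast_eq_zero_iff 2 p).mp h2')
    omega
  have h2ne0 : ((2 : ℕ) : ZMod p) ≠ 0 := by
    intro h
    have := Nat.le_of_dvd (by norm_num) ((ZMod.natCast_eq_zero_iff 2 p).mp h)
    omega
  have h5ne0 : ((5 : ℕ) : ZMod p) ≠ 0 := by
    intro h
    have := Nat.le_of_dvd (by norm_num) ((ZMod.natCast_eq_zero_iff 5 p).mp h)
    omega
  -- transfer lemmas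
  have mapK : ∀ (a e : ℕ) (c : ZMod n), ((a : ZMod n)) ^ e = c →
      ((a : ZMod K)) ^ e = φ c := by
    intro a e c h
    have := congrArg φ h
    rwa [map_pow, map_natCast] at this
  have mapP : ∀ (a e : ℕ) (c : ZMod n), ((a : ZMod n)) ^ e = c →
      ((a : ZMod p)) ^ e = ψ c := by
    intro a e c h
    have := congrArg ψ h
    rwa [map_pow, map_natCast] at this
  have odd_of_dvd : ∀ {x y : ℕ}, Odd y → x ∣ y → Odd x := by
    intro x y hy hxy
    rcases hxy with ⟨c, rfl⟩
    exact (Nat.odd_mul.mp hy).1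
  -- Step 1 : base 5 gives (5 : ZMod p)^d = 1
  have hp5 : ((5 : ℕ) : ZMod p) ^ d = 1 := by
    rcases h5 with h | ⟨j, hjs, hj⟩
    · have := mapP 5 d 1 h
      rwa [map_one] at this
    · exfalso
      have hK5 : ((5 : ℕ) : ZMod K) ^ (2 ^ j * d) = -1 := by
        have := mapK 5 (2 ^ j * d) (-1) hj
        rwa [map_neg, map_one] at this
      have ht945 : orderOf ((5 : ℕ) : ZMod K) ∣ 9445 := orderOf_dvd_iff_pow_eq_one.mpr fK4
      have htodd : Odd (orderOf ((5 : ℕ) : ZMod K)) := odd_of_dvd (by decide) ht945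
      have hsq : ((5 : ℕ) : ZMod K) ^ (2 ^ (j + 1) * d) = 1 := by
        rw [show 2 ^ (j + 1) * d = 2 ^ j * d * 2 by ring, pow_mul, hK5]
        ring
      have htd : orderOf ((5 : ℕ) : ZMod K) ∣ d := odd_dvd_of_dvd htodd (orderOf_dvd_iff_pow_eq_one.mpr hsq)
      have : ((5 : ℕ) : ZMod K) ^ (2 ^ j * d) = 1 :=
        orderOf_dvd_iff_pow_eq_one.mp (htd.mul_left _)
      rw [hK5] at this
      exact neK this
  -- Step 2 : base 2 gives (2 : ZMod p)^(4d) = -1 and 3 ≤ s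
  have hstep2 : ((2 : ℕ) : ZMod p) ^ (2 ^ 2 * d) = -1 ∧ 3 ≤ s := by
    rcases h2 with h | ⟨j, hjs, hj⟩
    · exfalso
      have hK2 : ((2 : ℕ) : ZMod K) ^ d = 1 := by
        have := mapK 2 d 1 h
        rwa [map_one] at this
      have hr75 : orderOf ((2 : ℕ) : ZMod K) ∣ 2 ^ 3 * 9445 := orderOf_dvd_iff_pow_eq_one.mpr fK1
      have hrd : orderOf ((2 : ℕ) : ZMod K) ∣ d := orderOf_dvd_iff_pow_eq_one.mpr hK2
      have hrodd : Odd (orderOf ((2 : ℕ) : ZMod K)) := odd_of_dvd hdodd hrd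
      have hr945 : orderOf ((2 : ℕ) : ZMod K) ∣ 9445 := odd_dvd_of_dvd hrodd hr75
      exact fK2 (orderOf_dvd_iff_pow_eq_one.mp hr945)
    · have hK2 : ((2 : ℕ) : ZMod K) ^ (2 ^ j * d) = -1 := by
        have := mapK 2 (2 ^ j * d) (-1) hj
        rwa [map_neg, map_one] at this
      have hr75 : orderOf ((2 : ℕ) : ZMod K) ∣ 2 ^ 3 * 9445 := orderOf_dvd_iff_pow_eq_one.mpr fK1
      have hsq : ((2 : ℕ) : ZMod K) ^ (2 ^ (j + 1) * d) = 1 := by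
        rw [show 2 ^ (j + 1) * d = 2 ^ j * d * 2 by ring, pow_mul, hK2]
        ring
      obtain ⟨e, m, hej, hmodd, hmd, hrem⟩ :=
        split_dvd_aux hdodd (orderOf_dvd_iff_pow_eq_one.mpr hsq)
      have he3 : e ≤ 3 := le_of_two_pow_dvd (by decide)
        ((Dvd.intro m hrem.symm).trans hr75)
      have hm945 : m ∣ 9445 := odd_dvd_of_dvd hmodd
        ((Dvd.intro_left (2 ^ e) hrem.symm).trans hr75)
      -- j must be 2
      have hj2 : j = 2 := by
        by_contra hne
        rcases Nat.lt_or_ge j 2 with hlt | hge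
        · -- j ≤ 1 : then e ≤ 2 and r ∣ 2^2 * 9445
          have he2 : e ≤ 2 := by omega
          have : orderOf ((2 : ℕ) : ZMod K) ∣ 2 ^ 2 * 9445 := by
            rw [hrem]; exact Nat.mul_dvd_mul (pow_dvd_pow 2 he2) hm945
          exact fK3 (orderOf_dvd_iff_pow_eq_one.mp this)
        · -- j ≥ 3 : then r ∣ 2^j * d so the power is 1, not -1
          have hj3 : 3 ≤ j := by omega
          have hdv : orderOf ((2 : ℕ) : ZMod K) ∣ 2 ^ j * d := by
            rw [hrem]; exact Nat.mul_dvd_mul (pow_dvd_pow 2 (he3.trans hj3)) hmd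
          have := orderOf_dvd_iff_pow_eq_one.mp hdv
          rw [hK2] at this
          exact neK this
      subst hj2
      refine ⟨?_, by omega⟩
      have := mapP 2 (2 ^ 2 * d) (-1) hj
      rwa [map_neg, map_one] at this
  obtain ⟨hp2, hs3⟩ := hstep2
  -- Step 3 : mod p analysis
  -- auxiliary : divisors of 2^s * d that divide p - 1 must divide K - 1
  have key : ∀ q : ℕ, q ∣ 2 ^ s * d → q ∣ p - 1 → q ∣ 2 ^ 4 * 9445 := by
    intro q hqN hqp
    have hqN' : q ∣ N := hsd ▸ hqN
    have hqKp : q ∣ K * (p - 1) := hqp.mul_left K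
    have hNeq : N - K * (p - 1) = 2 ^ 4 * 9445 := by
      simp only [hNdef, hn, hK]
      omega
    have := Nat.dvd_sub hqN' hqKp
    rwa [hNeq] at this
  -- base 5 : p ∣ 5^9445 - 1
  have hdvd5 : p ∣ 5 ^ 9445 - 1 := by
    have htd : orderOf ((5 : ℕ) : ZMod p) ∣ d := orderOf_dvd_iff_pow_eq_one.mpr hp5
    have htodd : Odd (orderOf ((5 : ℕ) : ZMod p)) := odd_of_dvd hdodd htd
    have htp1 : orderOf ((5 : ℕ) : ZMod p) ∣ p - 1 :=
      orderOf_dvd_iff_pow_eq_one.mpr (ZMod.pow_card_sub_one_eq_one h5ne0)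
    have ht945 : orderOf ((5 : ℕ) : ZMod p) ∣ 9445 :=
      odd_dvd_of_dvd htodd (key _ ((htd.mul_left (2 ^ s))) htp1)
    have h1 : ((5 : ℕ) : ZMod p) ^ 9445 = 1 := orderOf_dvd_iff_pow_eq_one.mp ht945
    have h2' : ((5 ^ 9445 - 1 : ℕ) : ZMod p) = 0 := by
      have hle : (1 : ℕ) ≤ 5 ^ 9445 := Nat.one_le_pow _ _ (by norm_num)
      rw [Nat.cast_sub hle, Nat.cast_pow, h1]
      simp
    exact (ZMod.natCast_eq_zero_iff _ p).mp h2'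
  -- base 2 : p ∣ 2^37780 + 1
  have hdvd2 : p ∣ 2 ^ 37780 + 1 := by
    have hsq : ((2 : ℕ) : ZMod p) ^ (2 ^ 3 * d) = 1 := by
      rw [show 2 ^ 3 * d = 2 ^ 2 * d * 2 by ring, pow_mul, hp2]
      ring
    obtain ⟨e, m, he3, hmodd, hmd, hrem⟩ :=
      split_dvd_aux hdodd (orderOf_dvd_iff_pow_eq_one.mpr hsq)
    have hmpos : 0 < m := hmodd.pos
    -- e = 3
    have he : e = 3 := by
      by_contra hne
      have he2 : e ≤ 2 := by omega
      have hdv : orderOf ((2 : ℕ) : ZMod p) ∣ 2 ^ 2 * d := by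
        rw [hrem]; exact Nat.mul_dvd_mul (pow_dvd_pow 2 he2) hmd
      have := orderOf_dvd_iff_pow_eq_one.mp hdv
      rw [hp2] at this
      exact nep this
    subst he
    have hrpp1 : orderOf ((2 : ℕ) : ZMod p) ∣ p - 1 :=
      orderOf_dvd_iff_pow_eq_one.mpr (ZMod.pow_card_sub_one_eq_one h2ne0)
    have hrpN : orderOf ((2 : ℕ) : ZMod p) ∣ 2 ^ s * d := by
      rw [hrem]; exact Nat.mul_dvd_mul (pow_dvd_pow 2 hs3) hmd
    have hrpK : orderOf ((2 : ℕ) : ZMod p) ∣ 2 ^ 4 * 9445 := key _ hrpN hrpp1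
    have hm945 : m ∣ 9445 := odd_dvd_of_dvd hmodd
      ((Dvd.intro_left (2 ^ 3) hrem.symm).trans hrpK)
    -- y = 2^(4m) equals -1
    have hy2 : ((2 : ℕ) : ZMod p) ^ (2 ^ 2 * m) * ((2 : ℕ) : ZMod p) ^ (2 ^ 2 * m) = 1 := by
      rw [← pow_add]
      have hdv : orderOf ((2 : ℕ) : ZMod p) ∣ 2 ^ 2 * m + 2 ^ 2 * m := by
        rw [hrem]; exact Dvd.intro 1 (by ring)
      exact orderOf_dvd_iff_pow_eq_one.mp hdv
    have hyne : ((2 : ℕ) : ZMod p) ^ (2 ^ 2 * m) ≠ 1 := by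
      intro h1
      have := orderOf_dvd_iff_pow_eq_one.mpr h1
      rw [hrem] at this
      have := Nat.le_of_dvd (by positivity) this
      omega
    have hy : ((2 : ℕ) : ZMod p) ^ (2 ^ 2 * m) = -1 := by
      rcases mul_self_eq_one_iff.mp hy2 with h | h
      · exact absurd h hyne
      · exact h
    have hqodd : Odd (9445 / m) := by
      have hmul : m * (9445 / m) = 9445 := Nat.mul_div_cancel' hm945
      have h9 : Odd (m * (9445 / m)) := by rw [hmul]; decide
      exact (Nat.odd_mul.mp h9).2
    have hfin : ((2 : ℕ) : ZMod p) ^ 37780 = -1 := by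
      have hmul : m * (9445 / m) = 9445 := Nat.mul_div_cancel' hm945
      have h37780 : 2 ^ 2 * m * (9445 / m) = 37780 := by
        rw [mul_assoc, hmul]
        norm_num
      rw [← h37780, pow_mul, hy, hqodd.neg_one_pow]
    have h2' : ((2 ^ 37780 + 1 : ℕ) : ZMod p) = 0 := by
      rw [Nat.cast_add, Nat.cast_pow, Nat.cast_one, hfin]
      ring
    exact (ZMod.natCast_eq_zero_iff _ p).mp h2'
  -- conclusion
  have hM : p ∣ (2 ^ 37780 + 1) % (5 ^ 9445 - 1) := (Nat.dvd_mod_iff hdvd5).mpr hdvd2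
  have hpK : p ∣ K := hgcd ▸ Nat.dvd_gcd hM hdvd5
  have : p ∣ 151121 := hpK
  have := Nat.le_of_dvd (by norm_num) this
  omega
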